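/- Let (x^{k+1}, ỹ^{k+1}, y^{k+1}) be produced by one SPIDA iteration from (x^k, y^k), where the dual kernel φ on ℝ^m is differentiable and ϱ-strongly convex and a differentiable ϱ-strongly convex kernel on ℝ^n (also denoted φ) is given. Then for every y ∈ Y and every α > 0: L(x^{k+1}, y) − L(x^{k+1}, ỹ^{k+1}) ≤ γ B_φ(y, y^k) − γ B_φ(y, y^{k+1}) − γ B_φ(ỹ^{k+1}, y^k) + (α‖AᵀA‖/ϱ) B_φ(x^{k+1}, x^k) − (γ − 1/(αϱ)) B_φ(y^{k+1}, ỹ^{k+1}), where ‖AᵀA‖ is the spectral norm of AᵀA. -/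

import Mathlib

noncomputable section
open scoped RealInnerProductSpace
open Filter
open scoped Topology

abbrev Euc (d : ℕ) : Type := EuclideanSpace ℝ (Fin d)

/-- Bregman distance associated with kernel `φ` whose gradient map is `φ'`. -/
def Breg {d : ℕ} (φ : Euc d → ℝ) (φ' : Euc d → Euc d) (x y : Euc d) : ℝ :=
  φ x - φ y - ⟪φ' y, x - y⟫

/-- The convex-concave Lagrangian `L(x,y) = f(x) + ⟨Ax, y⟩ − g(y)`. -/
def Lag {n m : ℕ} (f : Euc n → ℝ) (g : Euc m → ℝ) (A : Euc n →L[ℝ] Euc m)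
    (x : Euc n) (y : Euc m) : ℝ := f x + ⟪A x, y⟫ - g y


/-- slope of a differentiable function along a direction tends to the gradient pairing. -/
lemma slope_tendsto {d : ℕ} {c : Euc d → ℝ} {gr u : Euc d} (hc : HasGradientAt c gr u)
    (v : Euc d) :
    Tendsto (fun t : ℝ => (c (u + t • v) - c u) / t) (𝓝[>] (0:ℝ)) (𝓝 ⟪gr, v⟫) := by
  have hline : HasDerivAt (fun t : ℝ => u + t • v) v 0 := by
    simpa using ((hasDerivAt_id (0:ℝ)).smul_const v).const_add u
  have hcomp : HasDerivAt (fun t : ℝ => c (u + t • v)) ⟪gr, v⟫ 0 := by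
    have hc' : HasFDerivAt c ((InnerProductSpace.toDual ℝ (Euc _)) gr) (u + (0:ℝ) • v) := by
      simpa using hc.hasFDerivAt
    have h := hc'.comp_hasDerivAt 0 hline
    simp at h
    exact h
  have h2 := hasDerivAt_iff_tendsto_slope.1 hcomp
  have h3 : Tendsto (slope (fun t : ℝ => c (u + t • v)) 0) (𝓝[>] (0:ℝ)) (𝓝 ⟪gr, v⟫) :=
    h2.mono_left (nhdsWithin_mono _ (fun t ht => ne_of_gt (Set.mem_Ioi.1 ht)))
  refine Tendsto.congr' ?_ h3
  filter_upwards [self_mem_nhdsWithin] with t ht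
  have htne : (t:ℝ) ≠ 0 := ne_of_gt (Set.mem_Ioi.1 ht)
  simp [slope_def_field, div_eq_div_iff htne]

lemma ge_grad_of_slope {d : ℕ} {c : Euc d → ℝ} {gr u : Euc d} (hc : HasGradientAt c gr u)
    (v : Euc d) {C : ℝ} (h : ∀ t ∈ Set.Ioc (0:ℝ) 1, C ≤ (c (u + t • v) - c u) / t) :
    C ≤ ⟪gr, v⟫ := by
  refine ge_of_tendsto (slope_tendsto hc v) ?_
  filter_upwards [Ioc_mem_nhdsGT_of_mem (Set.mem_Ico.2 ⟨le_refl (0:ℝ), one_pos⟩)] with t ht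
  exact h t ht

lemma le_grad_of_slope {d : ℕ} {c : Euc d → ℝ} {gr u : Euc d} (hc : HasGradientAt c gr u)
    (v : Euc d) {C : ℝ} (h : ∀ t ∈ Set.Ioc (0:ℝ) 1, (c (u + t • v) - c u) / t ≤ C) :
    ⟪gr, v⟫ ≤ C := by
  refine le_of_tendsto (slope_tendsto hc v) ?_
  filter_upwards [Ioc_mem_nhdsGT_of_mem (Set.mem_Ico.2 ⟨le_refl (0:ℝ), one_pos⟩)] with t ht
  exact h t ht

/-- first-order condition for convex differentiable functions. -/
lemma convex_grad_ineq {d : ℕ} {c : Euc d → ℝ} {c' : Euc d → Euc d}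
    (hcv : ConvexOn ℝ Set.univ c) (hg : ∀ z, HasGradientAt c (c' z) z) (x y : Euc d) :
    c y + ⟪c' y, x - y⟫ ≤ c x := by
  have key : ⟪c' y, x - y⟫ ≤ c x - c y := by
    apply le_grad_of_slope (hg y) (x - y)
    intro t ht
    obtain ⟨ht0, ht1⟩ := ht
    have hcomb : y + t • (x - y) = (1 - t) • y + t • x := by module
    have := hcv.2 (Set.mem_univ y) (Set.mem_univ x) (by linarith : (0:ℝ) ≤ 1 - t)
      (le_of_lt ht0) (by ring)
    rw [hcomb]
    rw [div_le_iff₀ ht0]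
    have h2 : c ((1 - t) • y + t • x) ≤ (1 - t) * c y + t * c x := by simpa using this
    nlinarith
  linarith

/-- gradient of the shifted kernel `z ↦ c z - ϱ/2 ‖z‖²`. -/
lemma hasGradient_shift {d : ℕ} {c : Euc d → ℝ} {c' : Euc d → Euc d} {ϱ : ℝ}
    (hg : ∀ z, HasGradientAt c (c' z) z) (z : Euc d) :
    HasGradientAt (fun w => c w - ϱ / 2 * ‖w‖ ^ 2) (c' z - ϱ • z) z := by
  rw [hasGradientAt_iff_hasFDerivAt]
  have h1 : HasFDerivAt (fun w : Euc d => ϱ / 2 * ‖w‖ ^ 2)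
      ((ϱ / 2) • (2 • (innerSL ℝ z))) z :=
    ((hasStrictFDerivAt_norm_sq z).hasFDerivAt).const_smul (ϱ / 2)
  have h2 := (hg z).hasFDerivAt.sub h1
  convert h2 using 1
  all_goals try rfl
  ext w
  simp only [InnerProductSpace.toDual_apply_apply, ContinuousLinearMap.sub_apply,
    ContinuousLinearMap.smul_apply, innerSL_apply_apply, smul_eq_mul]
  rw [inner_sub_left, real_inner_smul_left]
  ring

/-- gradient of a nonneg scalar multiple. -/
lemma hasGradient_const_mul {d : ℕ} {c : Euc d → ℝ} {g : Euc d} {u : Euc d} (γ : ℝ)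
    (hg : HasGradientAt c g u) :
    HasGradientAt (fun w => γ * c w) (γ • g) u := by
  rw [hasGradientAt_iff_hasFDerivAt]
  have h2 := hg.hasFDerivAt.const_smul γ
  convert h2 using 1
  all_goals try rfl
  ext w
  simp only [InnerProductSpace.toDual_apply_apply, ContinuousLinearMap.smul_apply, smul_eq_mul]
  try rw [real_inner_smul_left]

/-- strong convexity lower bound on the Bregman distance. -/
lemma breg_strong {d : ℕ} {φ : Euc d → ℝ} {φ' : Euc d → Euc d} {ϱ : ℝ}
    (hg : ∀ z, HasGradientAt φ (φ' z) z)
    (hsc : ConvexOn ℝ Set.univ (fun z => φ z - ϱ / 2 * ‖z‖ ^ 2)) (x y : Euc d) :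
    ϱ / 2 * ‖x - y‖ ^ 2 ≤ Breg φ φ' x y := by
  have key := convex_grad_ineq hsc (hasGradient_shift hg) x y
  have hin : ⟪φ' y - ϱ • y, x - y⟫ = ⟪φ' y, x - y⟫ - ϱ * ⟪y, x - y⟫ := by
    rw [inner_sub_left, real_inner_smul_left]
  have hnorm : ‖x - y‖ ^ 2 = ‖x‖ ^ 2 - 2 * ⟪x, y⟫ + ‖y‖ ^ 2 := by
    rw [norm_sub_sq_real]
  have hyxy : ⟪y, x - y⟫ = ⟪x, y⟫ - ‖y‖ ^ 2 := by
    rw [inner_sub_right, real_inner_self_eq_norm_sq, real_inner_comm]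
  unfold Breg
  rw [hin, hyxy] at key
  rw [hnorm]
  nlinarith [key]

/-- three-point identity. -/
lemma breg_three_point {d : ℕ} (φ : Euc d → ℝ) (φ' : Euc d → Euc d) (y u w : Euc d) :
    Breg φ φ' y w - Breg φ φ' y u - Breg φ φ' u w = ⟪φ' u - φ' w, y - u⟫ := by
  unfold Breg
  have h1 : (y : Euc d) - w = (y - u) + (u - w) := by abel
  rw [h1, inner_sub_left, inner_add_right]
  ring

/-- three-point inequality for the Bregman-proximal maximization step. -/
lemma maximizer_grad {m : ℕ} {Y : Set (Euc m)} (hYcv : Convex ℝ Y)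
    {g : Euc m → ℝ} (hg : ConvexOn ℝ Set.univ g)
    {φ : Euc m → ℝ} {φ' : Euc m → Euc m} (hφg : ∀ z, HasGradientAt φ (φ' z) z)
    {γ : ℝ} (hγ : 0 < γ) (w : Euc m) {yk u : Euc m} (hu : u ∈ Y)
    (hmax : ∀ y ∈ Y, -g y + ⟪w, y⟫ - γ * Breg φ φ' y yk ≤
      -g u + ⟪w, u⟫ - γ * Breg φ φ' u yk) :
    ∀ y ∈ Y, (-g y + ⟪w, y⟫) - (-g u + ⟪w, u⟫) ≤
      γ * (Breg φ φ' y yk - Breg φ φ' y u - Breg φ φ' u yk) := by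
  intro y hy
  rw [breg_three_point]
  have key : ((-g y + ⟪w, y⟫) - (-g u + ⟪w, u⟫)) + γ * ⟪φ' yk, y - u⟫ ≤
      ⟪γ • φ' u, y - u⟫ := by
    apply ge_grad_of_slope (hasGradient_const_mul γ (hφg u)) (y - u)
    intro t ht
    obtain ⟨ht0, ht1⟩ := ht
    have hcomb : u + t • (y - u) = (1 - t) • u + t • y := by module
    have hmem : u + t • (y - u) ∈ Y := by
      rw [hcomb]
      exact hYcv hu hy (by linarith) (le_of_lt ht0) (by ring)
    have hcvx : g (u + t • (y - u)) ≤ (1 - t) * g u + t * g y := by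
      rw [hcomb]
      simpa using hg.2 (Set.mem_univ u) (Set.mem_univ y) (by linarith : (0:ℝ) ≤ 1 - t)
        (le_of_lt ht0) (by ring)
    have hmx := hmax _ hmem
    have hinw : ⟪w, u + t • (y - u)⟫ = ⟪w, u⟫ + t * ⟪w, y - u⟫ := by
      rw [inner_add_right, real_inner_smul_right]
    have hbreg : γ * Breg φ φ' (u + t • (y - u)) yk - γ * Breg φ φ' u yk =
        γ * φ (u + t • (y - u)) - γ * φ u - γ * (t * ⟪φ' yk, y - u⟫) := by
      unfold Breg
      have h3 : u + t • (y - u) - yk = (u - yk) + t • (y - u) := by abel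
      rw [h3, inner_add_right, real_inner_smul_right]
      ring
    have hinwy : ⟪w, y - u⟫ = ⟪w, y⟫ - ⟪w, u⟫ := by rw [inner_sub_right]
    rw [le_div_iff₀ ht0]
    nlinarith [hmx, hcvx, hbreg, hinw, hinwy]
  rw [real_inner_smul_left] at key
  have hsub : ⟪φ' u - φ' yk, y - u⟫ = ⟪φ' u, y - u⟫ - ⟪φ' yk, y - u⟫ := by
    rw [inner_sub_left]
  rw [hsub, mul_sub]
  linarith [key]

/-- descent inequality for the dual part of one SPIDA iteration. -/
theorem spida_dual_descent {n m : ℕ}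
    (X : Set (Euc n)) (Y : Set (Euc m))
    (hXne : X.Nonempty) (hXcl : IsClosed X) (hXcv : Convex ℝ X)
    (hYne : Y.Nonempty) (hYcl : IsClosed Y) (hYcv : Convex ℝ Y)
    (f : Euc n → ℝ) (g : Euc m → ℝ)
    (hf : ConvexOn ℝ Set.univ f) (hflsc : LowerSemicontinuous f)
    (hg : ConvexOn ℝ Set.univ g) (hglsc : LowerSemicontinuous g)
    (A : Euc n →L[ℝ] Euc m)
    (γ μ : ℝ) (hγ : 0 < γ) (hμ : 0 < μ)
    (φ : Euc m → ℝ) (φ' : Euc m → Euc m)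
    (hφg : ∀ z, HasGradientAt φ (φ' z) z) (hφcv : ConvexOn ℝ Set.univ φ)
    (ψ : Euc n → ℝ) (ψ' : Euc n → Euc n)
    (hψg : ∀ z, HasGradientAt ψ (ψ' z) z) (hψcv : ConvexOn ℝ Set.univ ψ)
    (xk x1 : Euc n) (yk yt1 y1 : Euc m)
    (hxk : xk ∈ X) (hyk : yk ∈ Y)
    (hyt1mem : yt1 ∈ Y)
    (hyt1max : ∀ y ∈ Y, -g y + ⟪A xk, y⟫ - γ * Breg φ φ' y yk ≤
      -g yt1 + ⟪A xk, yt1⟫ - γ * Breg φ φ' yt1 yk)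
    (hx1mem : x1 ∈ X)
    (hx1min : ∀ x ∈ X, f x1 + ⟪A x1, yt1⟫ + μ * Breg ψ ψ' x1 xk ≤
      f x + ⟪A x, yt1⟫ + μ * Breg ψ ψ' x xk)
    (hy1mem : y1 ∈ Y)
    (hy1max : ∀ y ∈ Y, -g y + ⟪A x1, y⟫ - γ * Breg φ φ' y yk ≤
      -g y1 + ⟪A x1, y1⟫ - γ * Breg φ φ' y1 yk)
    (ϱ : ℝ) (hϱ : 0 < ϱ)
    (hφsc : ConvexOn ℝ Set.univ (fun z => φ z - ϱ / 2 * ‖z‖ ^ 2))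
    (φn : Euc n → ℝ) (φn' : Euc n → Euc n)
    (hφng : ∀ z, HasGradientAt φn (φn' z) z)
    (hφnsc : ConvexOn ℝ Set.univ (fun z => φn z - ϱ / 2 * ‖z‖ ^ 2)) :
    ∀ y ∈ Y, ∀ α : ℝ, 0 < α →
      Lag f g A x1 y - Lag f g A x1 yt1 ≤
        γ * Breg φ φ' y yk - γ * Breg φ φ' y y1 - γ * Breg φ φ' yt1 yk
          + α * ‖(ContinuousLinearMap.adjoint A).comp A‖ / ϱ * Breg φn φn' x1 xk
          - (γ - 1 / (α * ϱ)) * Breg φ φ' y1 yt1 := by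
  intro y hy α hα
  set T := (ContinuousLinearMap.adjoint A).comp A with hT
  set N := ‖T‖ with hN
  set z := x1 - xk with hz
  set v := y1 - yt1 with hv
  have hN0 : (0:ℝ) ≤ N := norm_nonneg _
  have I := maximizer_grad hYcv hg hφg hγ (A xk) hyt1mem hyt1max y1 hy1mem
  have II := maximizer_grad hYcv hg hφg hγ (A x1) hy1mem hy1max y hy
  have hB1 : ϱ / 2 * ‖v‖ ^ 2 ≤ Breg φ φ' y1 yt1 := by
    rw [hv]; exact breg_strong hφg hφsc y1 yt1
  have hB2 : ϱ / 2 * ‖z‖ ^ 2 ≤ Breg φn φn' x1 xk := by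
    rw [hz]; exact breg_strong hφng hφnsc x1 xk
  -- spectral norm bound : ‖A z‖² ≤ N ‖z‖²
  have hAzN : ‖A z‖ ^ 2 ≤ N * ‖z‖ ^ 2 := by
    have e1 : ‖A z‖ ^ 2 = ⟪T z, z⟫ := by
      rw [hT]
      rw [ContinuousLinearMap.comp_apply, ContinuousLinearMap.adjoint_inner_left]
      rw [real_inner_self_eq_norm_sq]
    have e2 : ⟪T z, z⟫ ≤ ‖T z‖ * ‖z‖ := real_inner_le_norm _ _
    have e3 : ‖T z‖ ≤ N * ‖z‖ := T.le_opNorm z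
    have e4 : ‖T z‖ * ‖z‖ ≤ (N * ‖z‖) * ‖z‖ :=
      mul_le_mul_of_nonneg_right e3 (norm_nonneg _)
    rw [e1]; nlinarith [e2, e4]
  have h1 : ⟪A z, v⟫ ≤ ‖A z‖ * ‖v‖ := real_inner_le_norm _ _
  have s1 : ‖A z‖ * ‖v‖ ≤ α / 2 * ‖A z‖ ^ 2 + 1 / (2 * α) * ‖v‖ ^ 2 := by
    rw [← sub_nonneg]
    have key : α / 2 * ‖A z‖ ^ 2 + 1 / (2 * α) * ‖v‖ ^ 2 - ‖A z‖ * ‖v‖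
        = (α * ‖A z‖ - ‖v‖) ^ 2 / (2 * α) := by
      field_simp
      ring
    rw [key]
    positivity
  have s2 : α / 2 * ‖A z‖ ^ 2 ≤ α / 2 * (N * ‖z‖ ^ 2) :=
    mul_le_mul_of_nonneg_left hAzN (by linarith)
  have s3 : α / 2 * (N * ‖z‖ ^ 2) ≤ α * N / ϱ * Breg φn φn' x1 xk := by
    have hc : (0:ℝ) ≤ α * N / ϱ := div_nonneg (mul_nonneg hα.le hN0) hϱ.le
    have := mul_le_mul_of_nonneg_left hB2 hc
    have heq : α * N / ϱ * (ϱ / 2 * ‖z‖ ^ 2) = α / 2 * (N * ‖z‖ ^ 2) := by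
      field_simp
    linarith
  have s4 : 1 / (2 * α) * ‖v‖ ^ 2 ≤ 1 / (α * ϱ) * Breg φ φ' y1 yt1 := by
    have hc : (0:ℝ) ≤ 1 / (α * ϱ) := by positivity
    have := mul_le_mul_of_nonneg_left hB1 hc
    have heq : 1 / (α * ϱ) * (ϱ / 2 * ‖v‖ ^ 2) = 1 / (2 * α) * ‖v‖ ^ 2 := by
      field_simp
    linarith
  have cross : ⟪A z, v⟫ ≤
      α * N / ϱ * Breg φn φn' x1 xk + 1 / (α * ϱ) * Breg φ φ' y1 yt1 := by
    linarith
  have hexp : ⟪A z, v⟫ =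
      ⟪A x1, y1⟫ - ⟪A x1, yt1⟫ - ⟪A xk, y1⟫ + ⟪A xk, yt1⟫ := by
    rw [hz, hv, map_sub, inner_sub_left, inner_sub_right, inner_sub_right]
    ring
  rw [hexp] at cross
  unfold Lag
  rw [hN] at cross
  linarith [I, II, cross]
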